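/- Let X and Y be symmetric positive definite matrices, X = X^{1/2}(X^{1/2})ᵀ and X = L·Lᵀ two square-root factorizations with L invertible. Then ‖log(X^{-1/2}·Y·X^{-T/2})‖_F = ‖log(L⁻¹·Y·L^{-T})‖_F, where log is the matrix logarithm (both arguments are similar to SPD matrices so the logarithm is defined) and ‖·‖_F is the Frobenius norm. -/

import Mathlib

open Matrix

/-- Matrix logarithm, defined via the continuous functional calculus (for self-adjoint
matrices; junk value otherwise). -/
noncomputable def matLog {n : ℕ} (A : Matrix (Fin n) (Fin n) ℝ) : Matrix (Fin n) (Fin n) ℝ :=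
  cfc Real.log A

/-- Frobenius norm of a real matrix. -/
noncomputable def frobNorm {n : ℕ} (A : Matrix (Fin n) (Fin n) ℝ) : ℝ :=
  Real.sqrt (∑ i, ∑ j, (A i j) ^ 2)


lemma frob_sq_eq_trace {n : ℕ} (A : Matrix (Fin n) (Fin n) ℝ) :
    (∑ i, ∑ j, (A i j) ^ 2) = (Aᵀ * A).trace := by
  simp [Matrix.trace, Matrix.mul_apply, Matrix.diag, sq]
  exact Finset.sum_comm

/-- Conjugation by an orthogonal matrix as a ⋆-algebra homomorphism. -/
noncomputable def conjHom {n : ℕ} (Q : Matrix (Fin n) (Fin n) ℝ) (hQ : Q * Qᵀ = 1) :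
    Matrix (Fin n) (Fin n) ℝ →⋆ₐ[ℝ] Matrix (Fin n) (Fin n) ℝ where
  toFun M := Q * M * Qᵀ
  map_one' := by simpa using hQ
  map_mul' M N := by
    have h2 : Qᵀ * Q = 1 := mul_eq_one_comm.mp hQ
    calc Q * (M * N) * Qᵀ = Q * M * (Qᵀ * Q) * N * Qᵀ := by rw [h2]; noncomm_ring
    _ = Q * M * Qᵀ * (Q * N * Qᵀ) := by noncomm_ring
  map_zero' := by simp
  map_add' M N := by noncomm_ring
  commutes' r := by
    show Q * (algebraMap ℝ _ r) * Qᵀ = _; rw [Algebra.algebraMap_eq_smul_one, Matrix.mul_smul, mul_one, Matrix.smul_mul, hQ]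
  map_star' M := by
    simp only [Matrix.star_eq_conjTranspose, Matrix.conjTranspose_eq_transpose_of_trivial,
      Matrix.transpose_mul, Matrix.transpose_transpose, Matrix.mul_assoc]

lemma frobNorm_conj {n : ℕ} (Q M : Matrix (Fin n) (Fin n) ℝ) (hQ : Q * Qᵀ = 1) :
    frobNorm (Q * M * Qᵀ) = frobNorm M := by
  have h2 : Qᵀ * Q = 1 := mul_eq_one_comm.mp hQ
  unfold frobNorm
  rw [frob_sq_eq_trace, frob_sq_eq_trace]
  congr 1
  have key : (Q * M * Qᵀ)ᵀ * (Q * M * Qᵀ) = Q * (Mᵀ * M) * Qᵀ := by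
    calc (Q * M * Qᵀ)ᵀ * (Q * M * Qᵀ)
        = Q * Mᵀ * (Qᵀ * Q) * M * Qᵀ := by
          simp only [Matrix.transpose_mul, Matrix.transpose_transpose, Matrix.mul_assoc]
      _ = Q * (Mᵀ * M) * Qᵀ := by rw [h2]; noncomm_ring
  rw [key, Matrix.trace_mul_cycle, ← Matrix.mul_assoc, h2, Matrix.one_mul]

/-- The affine-invariant Riemannian distance `‖log(X^{-1/2} Y X^{-T/2})‖_F` on the SPD
manifold does not depend on the chosen square root of `X`: if `X = R·Rᵀ = L·Lᵀ` with `R, L`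
invertible and `Y` is SPD, then `‖log(R⁻¹ Y R⁻ᵀ)‖_F = ‖log(L⁻¹ Y L⁻ᵀ)‖_F`. -/
theorem stmt_9 {n : ℕ} (X Y R L : Matrix (Fin n) (Fin n) ℝ)
    (hX : X.PosDef) (hY : Y.PosDef) (hXR : X = R * Rᵀ) (hXL : X = L * Lᵀ)
    (hR : IsUnit R.det) (hL : IsUnit L.det) :
    frobNorm (matLog (R⁻¹ * Y * (Rᵀ)⁻¹)) = frobNorm (matLog (L⁻¹ * Y * (Lᵀ)⁻¹)) := by
  have hRt : IsUnit (Rᵀ).det := by rwa [Matrix.det_transpose]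
  have hLt : IsUnit (Lᵀ).det := by rwa [Matrix.det_transpose]
  have hYdet : IsUnit Y.det := isUnit_iff_ne_zero.mpr hY.det_pos.ne'
  set A := R⁻¹ * Y * (Rᵀ)⁻¹ with hA
  set Q := L⁻¹ * R with hQdef
  have hQt : Qᵀ = Rᵀ * (Lᵀ)⁻¹ := by
    rw [hQdef, Matrix.transpose_mul, Matrix.transpose_nonsing_inv]
  have hQ : Q * Qᵀ = 1 := by
    rw [hQt, hQdef]
    calc L⁻¹ * R * (Rᵀ * (Lᵀ)⁻¹) = L⁻¹ * (R * Rᵀ) * (Lᵀ)⁻¹ := by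
          simp only [Matrix.mul_assoc]
      _ = L⁻¹ * (L * Lᵀ) * (Lᵀ)⁻¹ := by rw [← hXR, hXL]
      _ = 1 := by
          rw [← Matrix.mul_assoc, Matrix.nonsing_inv_mul L hL,
            Matrix.one_mul, Matrix.mul_nonsing_inv _ hLt]
  have hB : Q * A * Qᵀ = L⁻¹ * Y * (Lᵀ)⁻¹ := by
    rw [hQt, hQdef, hA]
    calc L⁻¹ * R * (R⁻¹ * Y * (Rᵀ)⁻¹) * (Rᵀ * (Lᵀ)⁻¹)
        = L⁻¹ * (R * R⁻¹) * Y * ((Rᵀ)⁻¹ * Rᵀ) * (Lᵀ)⁻¹ := by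
          simp only [Matrix.mul_assoc]
      _ = L⁻¹ * Y * (Lᵀ)⁻¹ := by
          rw [Matrix.mul_nonsing_inv R hR, Matrix.nonsing_inv_mul _ hRt, Matrix.mul_one,
            Matrix.mul_one]
  have hYsymm : Yᵀ = Y := by
    have := hY.isHermitian
    rwa [Matrix.IsHermitian, Matrix.conjTranspose_eq_transpose_of_trivial] at this
  have hA_sa : IsSelfAdjoint A := by
    show star A = A
    rw [Matrix.star_eq_conjTranspose, Matrix.conjTranspose_eq_transpose_of_trivial, hA]
    rw [Matrix.transpose_mul, Matrix.transpose_mul, Matrix.transpose_nonsing_inv,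
      Matrix.transpose_nonsing_inv, Matrix.transpose_transpose, hYsymm, Matrix.mul_assoc]
  have hAunit : IsUnit A := by
    have hmul : A * (Rᵀ * Y⁻¹ * R) = 1 := by
      rw [hA]
      calc R⁻¹ * Y * (Rᵀ)⁻¹ * (Rᵀ * Y⁻¹ * R)
          = R⁻¹ * (Y * (((Rᵀ)⁻¹ * Rᵀ) * Y⁻¹)) * R := by simp only [Matrix.mul_assoc]
        _ = 1 := by
            rw [Matrix.nonsing_inv_mul _ hRt, Matrix.one_mul,
              Matrix.mul_nonsing_inv Y hYdet, Matrix.mul_one, Matrix.nonsing_inv_mul R hR]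
    exact ⟨⟨A, Rᵀ * Y⁻¹ * R, hmul, mul_eq_one_comm.mp hmul⟩, rfl⟩
  haveI : CompactSpace (spectrum ℝ A) := by
    have hA_herm : A.IsHermitian := hA_sa
    have hfin : (spectrum ℝ A).Finite := by
      rw [Matrix.IsHermitian.spectrum_real_eq_range_eigenvalues hA_herm]
      exact Set.finite_range _
    exact isCompact_iff_compactSpace.mp hfin.isCompact
  have hf : ContinuousOn Real.log (spectrum ℝ A) := by
    refine Real.continuousOn_log.mono ?_
    intro x hx hx0
    simp only [Set.mem_singleton_iff] at hx0
    subst hx0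
    exact spectrum.zero_notMem ℝ hAunit hx
  have hφ : Continuous (conjHom Q hQ) := by
    show Continuous fun M : Matrix (Fin n) (Fin n) ℝ => Q * M * Qᵀ
    exact (continuous_const.matrix_mul continuous_id).matrix_mul continuous_const
  have hφa : IsSelfAdjoint ((conjHom Q hQ) A) := hA_sa.map (conjHom Q hQ)
  have hcfc := (conjHom Q hQ).map_cfc Real.log A hf hφ hA_sa hφa
  rw [← hB]
  have heq : matLog (Q * A * Qᵀ) = Q * matLog A * Qᵀ := by
    have : (conjHom Q hQ) A = Q * A * Qᵀ := rfl
    unfold matLog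
    rw [← this, ← hcfc]
    rfl
  rw [heq]
  exact (frobNorm_conj Q (matLog A) hQ).symm
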